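/- (Key structural lemma for informativity.) Assume R ≻ 0 and the pair (Q^{1/2}, A) is observable. Let K = (A_K ∈ ℝ^{n×n}, B_K ∈ ℝ^{n×p}, C_K ∈ ℝ^{m×n}) be a full-order strictly proper policy with A_cl(K) stable. Suppose B̃ ∈ ℝ^{2n×k} satisfies C_cl(K)·exp(A_cl(K)·τ)·B̃ = 0 for all τ ≥ 0, and let X̃ ∈ ℝ^{2n×2n} be the solution of the Lyapunov equation A_cl(K)·X̃ + X̃·A_cl(K)ᵀ + B̃·B̃ᵀ = 0. Then X̃ has the block form [[0, 0],[0, X̃_{22}]] with n×n blocks, i.e. its top-left n×n block and its top-right n×n block are both zero. -/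

import Mathlib

open Matrix MeasureTheory Filter Topology

noncomputable section

/-- A real square matrix is (Hurwitz) stable if every eigenvalue of it, viewed as a
complex matrix, has strictly negative real part. -/
def IsStableMatrix {ι : Type*} [Fintype ι] [DecidableEq ι] (M : Matrix ι ι ℝ) : Prop :=
  ∀ μ ∈ spectrum ℂ (M.map fun x => (x : ℂ)), μ.re < 0

/-- The pair `(A, B)` is controllable if the controllability matrix
`[B, AB, …, A^{card−1}B]` has full row rank. -/
def Controllable {ι μ : Type*} [Fintype ι] [DecidableEq ι] [Fintype μ]
    (A : Matrix ι ι ℝ) (B : Matrix ι μ ℝ) : Prop :=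
  (Matrix.of fun (i : ι) (kj : Fin (Fintype.card ι) × μ) => (A ^ (kj.1 : ℕ) * B) i kj.2).rank
    = Fintype.card ι

/-- Closed-loop `A` matrix of a full-order strictly proper policy `(A_K, B_K, C_K)`. -/
def AclM {n m p : ℕ} (A : Matrix (Fin n) (Fin n) ℝ) (B : Matrix (Fin n) (Fin m) ℝ)
    (C : Matrix (Fin p) (Fin n) ℝ) (AK : Matrix (Fin n) (Fin n) ℝ)
    (BK : Matrix (Fin n) (Fin p) ℝ) (CK : Matrix (Fin m) (Fin n) ℝ) :
    Matrix (Fin n ⊕ Fin n) (Fin n ⊕ Fin n) ℝ :=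
  fromBlocks A (B * CK) (BK * C) AK

/-- The positive semidefinite square root of a positive semidefinite matrix (the definition
`Matrix.PosSemidef.sqrt` of the older Mathlib, which has since been removed). -/
def Matrix.PosSemidef.sqrt {ι : Type*} [Fintype ι] [DecidableEq ι]
    {M : Matrix ι ι ℝ} (hM : M.PosSemidef) : Matrix ι ι ℝ :=
  hM.1.eigenvectorUnitary.1 * diagonal ((↑) ∘ Real.sqrt ∘ hM.1.eigenvalues) *
    (star hM.1.eigenvectorUnitary : Matrix ι ι ℝ)

/-- Closed-loop `B` matrix of a full-order strictly proper policy. -/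
def BclM {n p : ℕ} {W : Matrix (Fin n) (Fin n) ℝ} {V : Matrix (Fin p) (Fin p) ℝ}
    (hW : W.PosSemidef) (hV : V.PosDef) (BK : Matrix (Fin n) (Fin p) ℝ) :
    Matrix (Fin n ⊕ Fin n) (Fin n ⊕ Fin p) ℝ :=
  fromBlocks hW.sqrt 0 0 (BK * hV.posSemidef.sqrt)

/-- Closed-loop `C` matrix of a full-order strictly proper policy. -/
def CclM {n m : ℕ} {Q : Matrix (Fin n) (Fin n) ℝ} {R : Matrix (Fin m) (Fin m) ℝ}
    (hQ : Q.PosSemidef) (hR : R.PosDef) (CK : Matrix (Fin m) (Fin n) ℝ) :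
    Matrix (Fin n ⊕ Fin m) (Fin n ⊕ Fin n) ℝ :=
  fromBlocks hQ.sqrt 0 0 (hR.posSemidef.sqrt * CK)

/-- `K` is non-degenerate for LQG (relative to closed-loop data and cost level `γ`):
there are a positive definite `P` with invertible top-right `n×n` block and a symmetric
`Γ` certifying the nonstrict LMIs with `γ = J(K)`. -/
def NonDegenerateLQG {n m p : ℕ} (Acl : Matrix (Fin n ⊕ Fin n) (Fin n ⊕ Fin n) ℝ)
    (Bcl : Matrix (Fin n ⊕ Fin n) (Fin n ⊕ Fin p) ℝ)
    (Ccl : Matrix (Fin n ⊕ Fin m) (Fin n ⊕ Fin n) ℝ) (γ : ℝ) : Prop :=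
  ∃ (P : Matrix (Fin n ⊕ Fin n) (Fin n ⊕ Fin n) ℝ)
    (Γ : Matrix (Fin n ⊕ Fin m) (Fin n ⊕ Fin m) ℝ),
    P.PosDef ∧ IsUnit P.toBlocks₁₂ ∧ Γ.IsSymm ∧
    (-(fromBlocks (Aclᵀ * P + P * Acl) (P * Bcl) (Bclᵀ * P)
        (-(γ • (1 : Matrix (Fin n ⊕ Fin p) (Fin n ⊕ Fin p) ℝ))))).PosSemidef ∧
    (fromBlocks P Cclᵀ Ccl Γ).PosSemidef ∧
    Γ.trace ≤ γ

section AuxKeyStructural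

open Polynomial

variable {ι : Type*} [Fintype ι] [DecidableEq ι]

lemma aux_eval_charpoly {K : Type*} [Field K] (M : Matrix ι ι K) (μ : K) :
    (M.charpoly).eval μ = (Matrix.diagonal (fun _ => μ) - M).det := by
  rw [Matrix.charpoly, ← Polynomial.coe_evalRingHom, RingHom.map_det]
  congr 1
  ext i j
  by_cases h : i = j <;>
    simp [Matrix.charmatrix_apply, Matrix.diagonal, h, Matrix.sub_apply]

lemma aux_mem_spectrum_iff (M : Matrix ι ι ℂ) (μ : ℂ) :
    μ ∈ spectrum ℂ M ↔ (M.charpoly).eval μ = 0 := by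
  rw [spectrum.mem_iff, aux_eval_charpoly, Matrix.isUnit_iff_isUnit_det, isUnit_iff_ne_zero,
    not_ne_iff]
  congr! 2

lemma aux_lyap_inj (M : Matrix ι ι ℝ) (hM : IsStableMatrix M)
    (X : Matrix ι ι ℝ) (hX : M * X + X * Mᵀ = 0) : X = 0 := by
  cases isEmpty_or_nonempty ι with
  | inl h => ext i j; exact (IsEmpty.false i).elim
  | inr hne =>
  set φ : Matrix ι ι ℝ →+* Matrix ι ι ℂ := Complex.ofRealHom.mapMatrix with hφ
  set Mc : Matrix ι ι ℂ := M.map (fun x => (x : ℂ)) with hMc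
  set Xc : Matrix ι ι ℂ := X.map (fun x => (x : ℂ)) with hXc
  have hφM : φ M = Mc := rfl
  have hφX : φ X = Xc := rfl
  have hφMt : φ Mᵀ = Mcᵀ := by
    rw [hφ, RingHom.mapMatrix_apply, Matrix.transpose_map]; rfl
  have hMX : Mc * Xc = Xc * (-Mcᵀ) := by
    have h := congrArg φ hX
    rw [map_add, _root_.map_mul, _root_.map_mul, map_zero, hφM, hφX, hφMt] at h
    rw [mul_neg]
    exact eq_neg_of_add_eq_zero_left h
  have hpow : ∀ j : ℕ, Mc ^ j * Xc = Xc * (-Mcᵀ) ^ j := by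
    intro j; induction j with
    | zero => simp
    | succ j ih => rw [pow_succ, pow_succ, mul_assoc, hMX, ← mul_assoc, ih, mul_assoc]
  have haeval : ∀ q : ℂ[X], (aeval Mc q) * Xc = Xc * aeval (-Mcᵀ) q := by
    intro q
    induction q using Polynomial.induction_on' with
    | add p q hp hq => rw [map_add, map_add, add_mul, mul_add, hp, hq]
    | monomial k c =>
      rw [aeval_monomial, aeval_monomial, mul_assoc, hpow k, ← mul_assoc,
        Algebra.commutes c Xc, mul_assoc]
  set p : ℂ[X] := (-Mcᵀ).charpoly with hp
  have h0 : (aeval Mc p) * Xc = 0 := by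
    rw [haeval, Matrix.aeval_self_charpoly, mul_zero]
  have hpne : p ≠ 0 := (Matrix.charpoly_monic _).ne_zero
  have hdeg : 0 < p.degree := by
    rw [Polynomial.degree_eq_natDegree hpne, hp, Matrix.charpoly_natDegree_eq_dim]
    exact_mod_cast Fintype.card_pos
  have hspec := spectrum.map_polynomial_aeval_of_degree_pos Mc p hdeg
  have hunit : IsUnit (aeval Mc p) := by
    rw [← spectrum.zero_notMem_iff ℂ, hspec]
    rintro ⟨μ, hμ, hev⟩
    have h1 : μ.re < 0 := hM μ hμ
    have hmat : Matrix.diagonal (fun _ : ι => μ) - (-Mcᵀ)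
        = (-(Matrix.diagonal (fun _ : ι => -μ) - Mc))ᵀ := by
      ext i j
      by_cases h : i = j
      · simp [Matrix.diagonal, h, Matrix.sub_apply, Matrix.neg_apply,
          Matrix.transpose_apply]
        ring
      · simp [Matrix.diagonal, h, (Ne.symm h : j ≠ i), Matrix.sub_apply, Matrix.neg_apply,
          Matrix.transpose_apply]
    have heq : p.eval μ = (-1:ℂ)^(Fintype.card ι) * (Mc.charpoly).eval (-μ) := by
      rw [hp, aux_eval_charpoly, hmat, Matrix.det_transpose, Matrix.det_neg, aux_eval_charpoly]
    replace hev : eval μ p = 0 := hev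
    rw [heq] at hev
    rcases mul_eq_zero.mp hev with h' | h'
    · exact absurd h' (pow_ne_zero _ (neg_ne_zero.mpr one_ne_zero))
    · have h3 : (-μ).re < 0 := hM (-μ) ((aux_mem_spectrum_iff Mc (-μ)).mpr h')
      rw [Complex.neg_re] at h3
      linarith
  have hXc : Xc = 0 := by
    calc Xc = ↑hunit.unit⁻¹ * (↑hunit.unit * Xc) := by
            rw [← mul_assoc, Units.inv_mul, one_mul]
    _ = 0 := by rw [hunit.unit_spec, h0, mul_zero]
  have hX0 : ∀ i j, X i j = 0 := by
    intro i j
    have : ((X i j : ℝ) : ℂ) = 0 := congrFun (congrFun hXc i) j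
    exact_mod_cast this
  ext i j
  exact hX0 i j

lemma aux_obs {n : ℕ} {κ : Type*} [Fintype κ]
    (A S : Matrix (Fin n) (Fin n) ℝ) (hctrb : Controllable Aᵀ Sᵀ)
    (Z : Matrix (Fin n) κ ℝ) (hZ : ∀ j : ℕ, S * A ^ j * Z = 0) : Z = 0 := by
  set M : Matrix (Fin n) (Fin (Fintype.card (Fin n)) × Fin n) ℝ :=
    Matrix.of (fun i kj => ((Aᵀ) ^ (kj.1 : ℕ) * Sᵀ) i kj.2) with hM
  have hrank : Mᵀ.rank = Fintype.card (Fin n) := by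
    rw [Matrix.rank_transpose]; exact hctrb
  have hker : ∀ v : Fin n → ℝ, Mᵀ.mulVec v = 0 → v = 0 := by
    intro v hv
    have h1 := LinearMap.finrank_range_add_finrank_ker Mᵀ.mulVecLin
    rw [show Module.finrank ℝ (LinearMap.range Mᵀ.mulVecLin) = Mᵀ.rank from rfl, hrank] at h1
    simp only [Module.finrank_pi, Fintype.card_fin] at h1
    have hker0 : Module.finrank ℝ (LinearMap.ker Mᵀ.mulVecLin) = 0 := by omega
    have hbot := Submodule.finrank_eq_zero.mp hker0
    have hv' : v ∈ LinearMap.ker Mᵀ.mulVecLin := hv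
    rw [hbot] at hv'
    exact hv'
  have hent : ∀ (j : ℕ) (i l : Fin n), ((Aᵀ) ^ j * Sᵀ) i l = (S * A ^ j) l i := by
    intro j i l
    rw [← Matrix.transpose_pow, ← Matrix.transpose_mul]
    rfl
  ext i c
  have hcol : Mᵀ.mulVec (fun i => Z i c) = 0 := by
    funext kj
    obtain ⟨j, l⟩ := kj
    have : Mᵀ.mulVec (fun i => Z i c) (j, l) = (S * A ^ (j : ℕ) * Z) l c := by
      simp only [Matrix.mulVec, dotProduct, Matrix.transpose_apply, hM, Matrix.of_apply,
        hent, Matrix.mul_apply]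
    rw [this, hZ]
    rfl
  have := congrFun (hker _ hcol) i
  simpa using this

lemma aux_unit_cancel {m : ℕ} {κ : Type*} [Fintype κ] (T : Matrix (Fin m) (Fin m) ℝ)
    (hT : IsUnit T) (M : Matrix (Fin m) κ ℝ) (h : T * M = 0) : M = 0 := by
  calc M = (↑hT.unit⁻¹ : Matrix (Fin m) (Fin m) ℝ)
        * ((hT.unit : Matrix (Fin m) (Fin m) ℝ) * M) := by
        rw [← Matrix.mul_assoc, Units.inv_mul, Matrix.one_mul]
  _ = 0 := by rw [hT.unit_spec, h, Matrix.mul_zero]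

lemma aux_blocks {n m : ℕ}
    (A : Matrix (Fin n) (Fin n) ℝ) (Bm : Matrix (Fin n) (Fin m) ℝ)
    (CK : Matrix (Fin m) (Fin n) ℝ) (A21 A22 : Matrix (Fin n) (Fin n) ℝ)
    (S : Matrix (Fin n) (Fin n) ℝ) (T : Matrix (Fin m) (Fin m) ℝ) (hT : IsUnit T)
    (X : Matrix (Fin n ⊕ Fin n) (Fin n ⊕ Fin n) ℝ)
    (hV : ∀ j : ℕ,
      fromBlocks S 0 0 (T * CK) * ((fromBlocks A (Bm * CK) A21 A22) ^ j * X) = 0) :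
    (∀ j : ℕ, S * A ^ j * X.toBlocks₁₁ = 0) ∧ (∀ j : ℕ, S * A ^ j * X.toBlocks₁₂ = 0) := by
  set Acl := fromBlocks A (Bm * CK) A21 A22 with hAcl
  set Y : ℕ → Matrix (Fin n ⊕ Fin n) (Fin n ⊕ Fin n) ℝ := fun j => Acl ^ j * X with hY
  have hCclY : ∀ j, S * (Y j).toBlocks₁₁ = 0 ∧ S * (Y j).toBlocks₁₂ = 0 ∧
      CK * (Y j).toBlocks₂₁ = 0 ∧ CK * (Y j).toBlocks₂₂ = 0 := by
    intro j
    have h : fromBlocks S 0 0 (T * CK) * Y j = 0 := hV j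
    rw [← Matrix.fromBlocks_toBlocks (Y j)] at h
    simp only [Matrix.fromBlocks_multiply, Matrix.zero_mul, Matrix.mul_zero, add_zero,
      zero_add] at h
    have h11 := congrArg Matrix.toBlocks₁₁ h
    have h12 := congrArg Matrix.toBlocks₁₂ h
    have h21 := congrArg Matrix.toBlocks₂₁ h
    have h22 := congrArg Matrix.toBlocks₂₂ h
    simp only [Matrix.toBlocks_fromBlocks₁₁, Matrix.toBlocks_fromBlocks₁₂,
      Matrix.toBlocks_fromBlocks₂₁, Matrix.toBlocks_fromBlocks₂₂] at h11 h12 h21 h22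
    refine ⟨by simpa using h11.trans (show Matrix.toBlocks₁₁ (0 : Matrix (Fin n ⊕ Fin m) (Fin n ⊕ Fin n) ℝ) = 0 by ext; rfl), by simpa using h12.trans (show Matrix.toBlocks₁₂ (0 : Matrix (Fin n ⊕ Fin m) (Fin n ⊕ Fin n) ℝ) = 0 by ext; rfl), ?_, ?_⟩
    · exact aux_unit_cancel T hT _ (by rw [← Matrix.mul_assoc]; simpa using h21.trans (show Matrix.toBlocks₂₁ (0 : Matrix (Fin n ⊕ Fin m) (Fin n ⊕ Fin n) ℝ) = 0 by ext; rfl))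
    · exact aux_unit_cancel T hT _ (by rw [← Matrix.mul_assoc]; simpa using h22.trans (show Matrix.toBlocks₂₂ (0 : Matrix (Fin n ⊕ Fin m) (Fin n ⊕ Fin n) ℝ) = 0 by ext; rfl))
  have htop : ∀ j, (Y j).toBlocks₁₁ = A ^ j * X.toBlocks₁₁ ∧
      (Y j).toBlocks₁₂ = A ^ j * X.toBlocks₁₂ := by
    intro j
    induction j with
    | zero => constructor <;> simp [hY]
    | succ j ih =>
      have hstep : Y (j + 1) = Acl * Y j := by
        show Acl ^ (j+1) * X = Acl * (Acl ^ j * X)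
        rw [pow_succ', Matrix.mul_assoc]
      have h1 : (Y (j+1)).toBlocks₁₁ = A * (Y j).toBlocks₁₁ + Bm * CK * (Y j).toBlocks₂₁ := by
        rw [hstep, ← Matrix.fromBlocks_toBlocks (Y j), hAcl]
        simp [Matrix.fromBlocks_multiply]
      have h2 : (Y (j+1)).toBlocks₁₂ = A * (Y j).toBlocks₁₂ + Bm * CK * (Y j).toBlocks₂₂ := by
        rw [hstep, ← Matrix.fromBlocks_toBlocks (Y j), hAcl]
        simp [Matrix.fromBlocks_multiply]
      obtain ⟨-, -, hc1, hc2⟩ := hCclY j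
      constructor
      · rw [h1, Matrix.mul_assoc Bm, hc1, Matrix.mul_zero, add_zero, ih.1, pow_succ',
          Matrix.mul_assoc]
      · rw [h2, Matrix.mul_assoc Bm, hc2, Matrix.mul_zero, add_zero, ih.2, pow_succ',
          Matrix.mul_assoc]
  constructor <;> intro j
  · rw [Matrix.mul_assoc, ← (htop j).1]; exact (hCclY j).1
  · rw [Matrix.mul_assoc, ← (htop j).2]; exact (hCclY j).2.1

lemma aux_derivs {ι' ρ κ : Type*} [Fintype ι'] [DecidableEq ι'] [Fintype ρ] [Fintype κ]
    (Ccl : Matrix ρ ι' ℝ) (Acl : Matrix ι' ι' ℝ) (Btil : Matrix ι' κ ℝ)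
    (h : ∀ τ : ℝ, 0 ≤ τ → Ccl * NormedSpace.exp (τ • Acl) * Btil = 0) :
    ∀ j : ℕ, Ccl * Acl ^ j * Btil = 0 := by
  letI : SeminormedRing (Matrix ι' ι' ℝ) := Matrix.linftyOpSemiNormedRing
  letI : NormedRing (Matrix ι' ι' ℝ) := Matrix.linftyOpNormedRing
  letI : NormedAlgebra ℝ (Matrix ι' ι' ℝ) := Matrix.linftyOpNormedAlgebra
  letI : SeminormedAddCommGroup (Matrix ρ κ ℝ) := Matrix.linftyOpSeminormedAddCommGroup
  letI : NormedAddCommGroup (Matrix ρ κ ℝ) := Matrix.linftyOpNormedAddCommGroup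
  letI : NormedSpace ℝ (Matrix ρ κ ℝ) := Matrix.linftyOpNormedSpace
  have key : ∀ j : ℕ, ∀ τ : ℝ, 0 ≤ τ →
      Ccl * Acl ^ j * NormedSpace.exp (τ • Acl) * Btil = 0 := by
    intro j
    induction j with
    | zero =>
      intro τ hτ
      simpa using h τ hτ
    | succ j ih =>
      have hL0add : ∀ (x y : Matrix ι' ι' ℝ),
          Ccl * Acl ^ j * (x + y) * Btil = Ccl * Acl ^ j * x * Btil
            + Ccl * Acl ^ j * y * Btil := by
        intro x y; rw [Matrix.mul_add, Matrix.add_mul]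
      let L0 : Matrix ι' ι' ℝ →ₗ[ℝ] Matrix ρ κ ℝ :=
        { toFun := fun Y => Ccl * Acl ^ j * Y * Btil
          map_add' := hL0add
          map_smul' := by
            intro c x
            simp only [RingHom.id_apply]
            rw [Matrix.mul_smul, Matrix.smul_mul] }
      let L : Matrix ι' ι' ℝ →L[ℝ] Matrix ρ κ ℝ := LinearMap.toContinuousLinearMap L0
      have hD : ∀ τ : ℝ, HasDerivAt
          (fun t : ℝ => Ccl * Acl ^ j * NormedSpace.exp (t • Acl) * Btil)
          (L (Acl * NormedSpace.exp (τ • Acl))) τ := by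
        intro τ
        exact L.hasFDerivAt.comp_hasDerivAt τ (hasDerivAt_exp_smul_const' (𝕂 := ℝ) Acl τ)
      have hpos : ∀ τ : ℝ, 0 < τ →
          Ccl * Acl ^ (j + 1) * NormedSpace.exp (τ • Acl) * Btil = 0 := by
        intro τ hτ
        have hev : (fun t : ℝ => Ccl * Acl ^ j * NormedSpace.exp (t • Acl) * Btil)
            =ᶠ[nhds τ] fun _ => (0 : Matrix ρ κ ℝ) := by
          filter_upwards [IsOpen.mem_nhds isOpen_Ioi hτ] with t ht
          exact ih t (le_of_lt ht)
        have h1 : HasDerivAt (fun _ : ℝ => (0 : Matrix ρ κ ℝ))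
            (L (Acl * NormedSpace.exp (τ • Acl))) τ :=
          (hD τ).congr_of_eventuallyEq hev.symm
        have h2 : L (Acl * NormedSpace.exp (τ • Acl)) = 0 :=
          h1.unique (hasDerivAt_const τ 0)
        have h3 : Ccl * Acl ^ j * (Acl * NormedSpace.exp (τ • Acl)) * Btil = 0 := h2
        rw [pow_succ, ← Matrix.mul_assoc Ccl (Acl ^ j) Acl,
          Matrix.mul_assoc (Ccl * Acl ^ j) Acl _]
        exact h3
      intro τ hτ
      have hGcont : Continuous
          (fun t : ℝ => Ccl * Acl ^ (j + 1) * NormedSpace.exp (t • Acl) * Btil) := by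
        have hc1 : Continuous (fun t : ℝ => NormedSpace.exp (t • Acl)) :=
          continuous_iff_continuousAt.2 fun t =>
            (hasDerivAt_exp_smul_const' (𝕂 := ℝ) Acl t).continuousAt
        have hc2 : Continuous (fun Y : Matrix ι' ι' ℝ => Ccl * Acl ^ (j + 1) * Y * Btil) := by
          apply Continuous.matrix_mul
          apply Continuous.matrix_mul continuous_const
          exact continuous_id
          exact continuous_const
        exact hc2.comp hc1
      have hclosed : IsClosed {t : ℝ |
          Ccl * Acl ^ (j + 1) * NormedSpace.exp (t • Acl) * Btil = 0} :=
        isClosed_eq hGcont continuous_const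
      have hsub : Set.Ici (0 : ℝ) ⊆ {t : ℝ |
          Ccl * Acl ^ (j + 1) * NormedSpace.exp (t • Acl) * Btil = 0} := by
        rw [← closure_Ioi]
        exact hclosed.closure_subset_iff.mpr fun t ht => hpos t ht
      exact hsub hτ
  intro j
  have h0 := key j 0 le_rfl
  rwa [zero_smul, NormedSpace.exp_zero, Matrix.mul_one] at h0

end AuxKeyStructural

/-- Key structural lemma for informativity: if `C_cl exp(A_cl τ) B̃ = 0` for all `τ ≥ 0`,
then the solution `X̃` of `A_cl X̃ + X̃ A_clᵀ + B̃ B̃ᵀ = 0` has vanishing top-left and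
top-right `n×n` blocks. -/
theorem key_structural_lemma_informativity {n m p k : ℕ}
    (A : Matrix (Fin n) (Fin n) ℝ) (B : Matrix (Fin n) (Fin m) ℝ)
    (C : Matrix (Fin p) (Fin n) ℝ)
    {Q : Matrix (Fin n) (Fin n) ℝ} {R : Matrix (Fin m) (Fin m) ℝ}
    (hQ : Q.PosSemidef) (hR : R.PosDef)
    (hQA : Controllable Aᵀ (hQ.sqrt)ᵀ)
    (AK : Matrix (Fin n) (Fin n) ℝ) (BK : Matrix (Fin n) (Fin p) ℝ)
    (CK : Matrix (Fin m) (Fin n) ℝ)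
    (hstab : IsStableMatrix (AclM A B C AK BK CK))
    (Btil : Matrix (Fin n ⊕ Fin n) (Fin k) ℝ)
    (hBtil : ∀ τ : ℝ, 0 ≤ τ →
      CclM hQ hR CK * NormedSpace.exp (τ • AclM A B C AK BK CK) * Btil = 0)
    (Xtil : Matrix (Fin n ⊕ Fin n) (Fin n ⊕ Fin n) ℝ)
    (hXtil : AclM A B C AK BK CK * Xtil + Xtil * (AclM A B C AK BK CK)ᵀ
        + Btil * Btilᵀ = 0) :
    Xtil.toBlocks₁₁ = 0 ∧ Xtil.toBlocks₁₂ = 0 := by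
  set Acl := AclM A B C AK BK CK with hAcl
  set Ccl := CclM hQ hR CK with hCcl
  -- Step A: derivatives of the exponential identity
  have hA : ∀ j : ℕ, Ccl * Acl ^ j * Btil = 0 := aux_derivs Ccl Acl Btil hBtil
  -- The Lyapunov operator
  let T : Matrix (Fin n ⊕ Fin n) (Fin n ⊕ Fin n) ℝ →ₗ[ℝ]
      Matrix (Fin n ⊕ Fin n) (Fin n ⊕ Fin n) ℝ :=
    { toFun := fun X => Acl * X + X * Aclᵀ
      map_add' := by
        intro x y
        show Acl * (x + y) + (x + y) * Aclᵀ = Acl * x + x * Aclᵀ + (Acl * y + y * Aclᵀ)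
        rw [Matrix.mul_add, Matrix.add_mul]
        abel
      map_smul' := by
        intro c x
        show Acl * (c • x) + (c • x) * Aclᵀ = c • (Acl * x + x * Aclᵀ)
        rw [Matrix.mul_smul, Matrix.smul_mul, smul_add] }
  have hTapp : ∀ X, T X = Acl * X + X * Aclᵀ := fun _ => rfl
  have hTinj : Function.Injective T := by
    intro X Y hXY
    have h0 : T (X - Y) = 0 := by
      rw [map_sub, hXY, sub_self]
    have := aux_lyap_inj Acl hstab (X - Y) (by rw [← hTapp]; exact h0)
    exact sub_eq_zero.mp this
  -- the invariant subspace
  let V : Submodule ℝ (Matrix (Fin n ⊕ Fin n) (Fin n ⊕ Fin n) ℝ) :=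
    { carrier := {X | ∀ j : ℕ, Ccl * Acl ^ j * X = 0}
      add_mem' := by
        intro x y hx hy j
        rw [Matrix.mul_add, hx j, hy j, add_zero]
      zero_mem' := fun j => Matrix.mul_zero _
      smul_mem' := by
        intro c x hx j
        rw [Matrix.mul_smul, hx j, smul_zero] }
  have hTV : ∀ X ∈ V, T X ∈ V := by
    intro X hX j
    show Ccl * Acl ^ j * (Acl * X + X * Aclᵀ) = 0
    rw [Matrix.mul_add]
    have e1 : Ccl * Acl ^ j * (Acl * X) = Ccl * Acl ^ (j + 1) * X := by
      rw [pow_succ, ← Matrix.mul_assoc Ccl (Acl ^ j) Acl, Matrix.mul_assoc (Ccl * Acl ^ j)]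
    have e2 : Ccl * Acl ^ j * (X * Aclᵀ) = (Ccl * Acl ^ j * X) * Aclᵀ := by
      rw [← Matrix.mul_assoc (Ccl * Acl ^ j) X Aclᵀ]
    rw [e1, e2, hX (j + 1), hX j, Matrix.zero_mul, add_zero]
  have hresinj : Function.Injective (T.restrict hTV) := by
    intro x y hxy
    apply Subtype.ext
    apply hTinj
    have := congrArg Subtype.val hxy
    simpa [LinearMap.restrict_apply] using this
  have hressurj : Function.Surjective (T.restrict hTV) :=
    LinearMap.injective_iff_surjective.mp hresinj
  have hBB : -(Btil * Btilᵀ) ∈ V := by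
    apply V.neg_mem
    intro j
    show Ccl * Acl ^ j * (Btil * Btilᵀ) = 0
    rw [← Matrix.mul_assoc, hA j, Matrix.zero_mul]
  obtain ⟨⟨X0, hX0V⟩, hX0⟩ := hressurj ⟨-(Btil * Btilᵀ), hBB⟩
  have hTX0 : T X0 = -(Btil * Btilᵀ) := by
    have := congrArg Subtype.val hX0
    simpa [LinearMap.restrict_apply] using this
  have hTXtil : T Xtil = -(Btil * Btilᵀ) := by
    rw [hTapp]
    exact eq_neg_of_add_eq_zero_left hXtil
  have hXeq : Xtil = X0 := hTinj (hTXtil.trans hTX0.symm)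
  have hXV : ∀ j : ℕ, Ccl * Acl ^ j * Xtil = 0 := by
    rw [hXeq]; exact hX0V
  -- the square root of R is invertible
  have hTunit : IsUnit hR.posSemidef.sqrt := by
    rw [Matrix.isUnit_iff_isUnit_det, isUnit_iff_ne_zero]
    intro hdet
    have hmul : hR.posSemidef.sqrt * hR.posSemidef.sqrt = R := by
      conv_rhs => rw [hR.posSemidef.1.spectral_theorem, Unitary.conjStarAlgAut_apply]
      unfold Matrix.PosSemidef.sqrt
      have hu := Unitary.coe_star_mul_self hR.posSemidef.1.eigenvectorUnitary
      simp only [Matrix.mul_assoc]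
      rw [← Matrix.mul_assoc (star _ : Matrix _ _ ℝ) _ _, hu, Matrix.one_mul,
        ← Matrix.mul_assoc (diagonal _) (diagonal _), diagonal_mul_diagonal]
      congr 3
      funext i
      simp [Real.mul_self_sqrt (hR.posSemidef.eigenvalues_nonneg i)]
    have : R.det = 0 := by
      rw [← hmul, Matrix.det_mul, hdet, mul_zero]
    exact absurd this (ne_of_gt hR.det_pos)
  -- conclude via the block-structure lemma
  have hblocks := aux_blocks A B CK (BK * C) AK hQ.sqrt hR.posSemidef.sqrt hTunit Xtil
    (fun j => by rw [← Matrix.mul_assoc]; exact hXV j)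
  exact ⟨aux_obs A hQ.sqrt hQA _ hblocks.1, aux_obs A hQ.sqrt hQA _ hblocks.2⟩

end
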